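/- Let κ be a positive integer and c an integer with 2 ≤ c ≤ κ+1. Then for every real z, lim_{a→1} (a-1)^{κ+1-c} m_κ^{1/a, 2-c}(z) = (-1)^{κ+1-c} C(z, c-1), where C(z, c-1) = z(z-1)···(z-c+2)/(c-1)!. -/
import Mathlib


open Filter Topology Finset

/-- Generalized binomial coefficient C(y, k) = y(y-1)⋯(y-k+1)/k!. -/
noncomputable def gbinom (y : ℝ) (k : ℕ) : ℝ :=
  (∏ i ∈ Finset.range k, (y - i)) / (Nat.factorial k)

/-- Pochhammer symbol (y)_k = y(y+1)⋯(y+k-1). -/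
noncomputable def poch (y : ℝ) (k : ℕ) : ℝ :=
  ∏ i ∈ Finset.range k, (y + i)

/-- Meixner polynomial m_n^{a,c}(x). -/
noncomputable def meixner (n : ℕ) (a c x : ℝ) : ℝ :=
  (a ^ n / (1 - a) ^ n) *
    ∑ j ∈ Finset.range (n + 1), (a⁻¹) ^ j * gbinom x j * gbinom (-x - c) (n - j)

lemma descPoch_smeval_real (y : ℝ) (k : ℕ) :
    (descPochhammer ℤ k).smeval y = ∏ i ∈ Finset.range k, (y - i) := by
  induction k with
  | zero => simp [descPochhammer_zero, Polynomial.smeval_one]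
  | succ n ih =>
    rw [descPochhammer_succ_right, Polynomial.smeval_mul, ih, Finset.prod_range_succ,
      Polynomial.smeval_sub, Polynomial.smeval_X, Polynomial.smeval_natCast]
    simp

lemma gbinom_eq_choose (y : ℝ) (k : ℕ) : gbinom y k = Ring.choose y k := by
  have h := Ring.descPochhammer_eq_factorial_smul_choose y k
  rw [descPoch_smeval_real] at h
  rw [gbinom, h, nsmul_eq_mul]
  field_simp [Nat.factorial_ne_zero]

lemma vdm (x y : ℝ) (n : ℕ) :
    ∑ j ∈ Finset.range (n+1), gbinom x j * gbinom y (n-j) = gbinom (x+y) n := by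
  simp only [gbinom_eq_choose]
  rw [Ring.add_choose_eq n (Commute.all x y),
    Finset.Nat.sum_antidiagonal_eq_sum_range_succ_mk]

lemma gbinom_nat_lt (n k : ℕ) (h : n < k) : gbinom (n : ℝ) k = 0 := by
  rw [gbinom, Finset.prod_eq_zero (Finset.mem_range.mpr h) (by simp), zero_div]

lemma gbinom_neg_one (n : ℕ) : gbinom (-1 : ℝ) n = (-1)^n := by
  rw [gbinom]
  have : ∏ i ∈ Finset.range n, (-1 - (i:ℝ)) = (-1)^n * (Nat.factorial n : ℝ) := by
    induction n with
    | zero => simp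
    | succ m ih =>
      rw [Finset.prod_range_succ, ih, Nat.factorial_succ]
      push_cast; ring
  rw [this]
  field_simp [Nat.factorial_ne_zero]

lemma trinom (x : ℝ) {m j : ℕ} (h : m ≤ j) :
    gbinom x j * (j.choose m : ℝ) = gbinom x m * gbinom (x - m) (j - m) := by
  have hsplit : ∏ i ∈ Finset.range j, (x - i)
      = (∏ i ∈ Finset.range m, (x - i)) * ∏ i ∈ Finset.range (j - m), (x - m - i) := by
    rw [← Nat.add_sub_cancel' h, Finset.prod_range_add]
    congr 1
    refine Finset.prod_congr (by rw [Nat.add_sub_cancel_left]) fun i _ => ?_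
    push_cast; ring
  have hfac : (j.choose m : ℝ) * m.factorial * (j-m).factorial = j.factorial := by
    rw [← Nat.cast_mul, ← Nat.cast_mul, Nat.choose_mul_factorial_mul_factorial h]
  simp only [gbinom]
  rw [hsplit]
  field_simp [Nat.factorial_ne_zero]
  rw [← hfac]
  ring

lemma weighted (x y : ℝ) (n : ℕ) (a : ℝ) :
    ∑ j ∈ Finset.range (n+1), a^j * gbinom x j * gbinom y (n-j)
    = ∑ m ∈ Finset.range (n+1), (a-1)^m * gbinom x m * gbinom (x + y - m) (n-m) := by
  have hpow : ∀ j ∈ Finset.range (n+1), a ^ j = ∑ m ∈ Finset.range (n+1), (a-1)^m * (j.choose m : ℝ) := by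
    intro j hj
    have hj' : j + 1 ≤ n + 1 := Finset.mem_range.mp hj
    have h0 : a ^ j = ∑ m ∈ Finset.range (j+1), (a-1)^m * (j.choose m : ℝ) := by
      have := add_pow (a - 1) 1 j
      simp only [one_pow, mul_one, sub_add_cancel] at this
      rw [this]
    rw [h0]
    refine Finset.sum_subset (Finset.range_subset_range.mpr hj') fun m _ hm => ?_
    rw [Nat.choose_eq_zero_of_lt (by simpa using Finset.mem_range.not.mp hm)]
    simp
  calc ∑ j ∈ Finset.range (n+1), a^j * gbinom x j * gbinom y (n-j)
      = ∑ j ∈ Finset.range (n+1), ∑ m ∈ Finset.range (n+1),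
          (a-1)^m * ((j.choose m : ℝ) * gbinom x j * gbinom y (n-j)) := by
        refine Finset.sum_congr rfl fun j hj => ?_
        rw [hpow j hj, Finset.sum_mul, Finset.sum_mul]
        refine Finset.sum_congr rfl fun m _ => ?_
        ring
    _ = ∑ m ∈ Finset.range (n+1), (a-1)^m * gbinom x m *
          ∑ i ∈ Finset.range (n-m+1), gbinom (x - m) i * gbinom y (n-m-i) := by
        rw [Finset.sum_comm]
        refine Finset.sum_congr rfl fun m hm => ?_
        rw [← Finset.mul_sum, Finset.mul_sum, mul_assoc, ← Finset.mul_sum]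
        congr 1
        have hm' : m ≤ n := Nat.lt_succ_iff.mp (Finset.mem_range.mp hm)
        have h1 : ∑ i ∈ Finset.range (n+1), ((i.choose m : ℝ)) * gbinom x i * gbinom y (n-i)
            = ∑ j ∈ Finset.Ico m (n+1), ((j.choose m : ℝ)) * gbinom x j * gbinom y (n-j) := by
          rw [Finset.range_eq_Ico, ← Finset.sum_Ico_consecutive _ (Nat.zero_le m) (by omega)]
          have hz : ∑ j ∈ Finset.Ico 0 m, ((j.choose m : ℝ)) * gbinom x j * gbinom y (n-j) = 0 :=
            Finset.sum_eq_zero fun j hj => by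
              rw [Nat.choose_eq_zero_of_lt (Finset.mem_Ico.mp hj).2]; simp
          rw [hz, zero_add]
        rw [h1, Finset.sum_Ico_eq_sum_range, Finset.mul_sum,
          show n + 1 - m = n - m + 1 from by omega]
        refine Finset.sum_congr rfl fun i hi => ?_
        have ht := trinom x (show m ≤ m + i by omega)
        rw [show m + i - m = i from by omega] at ht
        calc ((m+i).choose m : ℝ) * gbinom x (m+i) * gbinom y (n-(m+i))
            = (gbinom x (m+i) * ((m+i).choose m : ℝ)) * gbinom y (n-(m+i)) := by ring
          _ = gbinom x m * (gbinom (x-m) i * gbinom y (n-m-i)) := by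
              rw [ht, show n-(m+i)=n-m-i from by omega]; ring
    _ = ∑ m ∈ Finset.range (n+1), (a-1)^m * gbinom x m * gbinom (x + y - m) (n-m) := by
        refine Finset.sum_congr rfl fun m _ => ?_
        rw [vdm (x - m) y (n - m)]
        ring_nf

theorem stmt7 (κ : ℕ) (hκ : 0 < κ) (c : ℕ) (hc2 : 2 ≤ c) (hcκ : c ≤ κ + 1) (z : ℝ) :
    Tendsto (fun a : ℝ => (a - 1) ^ (κ + 1 - c) * meixner κ a⁻¹ (2 - (c : ℝ)) z)
      (𝓝[({0, 1} : Set ℝ)ᶜ] (1 : ℝ)) (𝓝 ((-1) ^ (κ + 1 - c) * gbinom z (c - 1))) := by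
  set g : ℝ → ℝ := fun a => ∑ i ∈ Finset.range (κ + 1 - (c-1)),
      (a-1)^i * gbinom z (c-1+i) * gbinom ((c:ℝ) - 2 - ((c-1+i : ℕ) : ℝ)) (κ - (c-1+i)) with hg
  have hgcont : Continuous g := by
    apply continuous_finset_sum
    intro i _
    fun_prop
  have hg1 : g 1 = (-1) ^ (κ + 1 - c) * gbinom z (c - 1) := by
    rw [hg]
    simp only [sub_self]
    rw [Finset.sum_eq_single_of_mem 0 (Finset.mem_range.mpr (by omega))
      (fun i _ hi => by rw [zero_pow hi, zero_mul, zero_mul])]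
    rw [pow_zero, one_mul, Nat.add_zero]
    have h1 : (c:ℝ) - 2 - ((c-1 : ℕ) : ℝ) = -1 := by
      have : ((c-1 : ℕ) : ℝ) = (c:ℝ) - 1 := by
        push_cast [Nat.cast_sub (by omega : 1 ≤ c)]; ring
      rw [this]; ring
    rw [h1, show κ - (c-1) = κ + 1 - c from by omega, gbinom_neg_one]
    ring
  have key : ∀ a : ℝ, a ≠ 0 → a ≠ 1 →
      (a - 1) ^ (κ + 1 - c) * meixner κ a⁻¹ (2 - (c : ℝ)) z = g a := by
    intro a ha0 ha1
    have hsub : a - 1 ≠ 0 := sub_ne_zero.mpr ha1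
    rw [meixner, inv_inv]
    have harg2 : -z - (2 - (c:ℝ)) = (c:ℝ) - 2 - z := by ring
    simp only [harg2]
    rw [weighted z ((c:ℝ) - 2 - z) κ a]
    have hS2 : ∑ m ∈ Finset.range (κ+1), (a-1)^m * gbinom z m * gbinom (z + ((c:ℝ) - 2 - z) - m) (κ-m)
        = (a-1)^(c-1) * g a := by
      have hdrop : ∑ m ∈ Finset.range (κ+1), (a-1)^m * gbinom z m * gbinom (z + ((c:ℝ) - 2 - z) - m) (κ-m)
          = ∑ m ∈ Finset.Ico (c-1) (κ+1), (a-1)^m * gbinom z m * gbinom (z + ((c:ℝ) - 2 - z) - m) (κ-m) := by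
        rw [Finset.range_eq_Ico, ← Finset.sum_Ico_consecutive _ (Nat.zero_le (c-1)) (by omega)]
        have hz : ∑ m ∈ Finset.Ico 0 (c-1), (a-1)^m * gbinom z m * gbinom (z + ((c:ℝ)-2-z) - m) (κ-m) = 0 := by
          refine Finset.sum_eq_zero fun m hm => ?_
          have hm' : m < c - 1 := (Finset.mem_Ico.mp hm).2
          have hcast : z + ((c:ℝ) - 2 - z) - m = ((c - 2 - m : ℕ) : ℝ) := by
            push_cast [Nat.cast_sub (by omega : m ≤ c - 2), Nat.cast_sub (by omega : 2 ≤ c)]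
            ring
          rw [hcast, gbinom_nat_lt _ _ (by omega)]
          ring
        rw [hz, zero_add]
      rw [hdrop, Finset.sum_Ico_eq_sum_range]
      rw [hg, Finset.mul_sum]
      refine Finset.sum_congr rfl fun i _ => ?_
      have hcast2 : z + ((c:ℝ) - 2 - z) - ((c-1+i : ℕ):ℝ) = (c:ℝ) - 2 - ((c-1+i : ℕ):ℝ) := by ring
      rw [hcast2, pow_add]
      ring
    rw [hS2]
    have hpre : (a⁻¹) ^ κ / (1 - a⁻¹) ^ κ = (1/(a-1))^κ := by
      rw [← div_pow]
      congr 1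
      rw [show (1:ℝ) - a⁻¹ = (a-1)/a from by field_simp]
      field_simp
    rw [hpre]
    have hfact : (a - 1) ^ (κ + 1 - c) * (a-1)^(c-1) = (a-1)^κ := by
      rw [← pow_add, show κ + 1 - c + (c-1) = κ from by omega]
    calc (a-1)^(κ+1-c) * ((1/(a-1))^κ * ((a-1)^(c-1) * g a))
        = ((a-1)^(κ+1-c) * (a-1)^(c-1)) * ((1/(a-1))^κ * g a) := by ring
      _ = (a-1)^κ * ((1/(a-1))^κ * g a) := by rw [hfact]
      _ = ((a-1) * (1/(a-1)))^κ * g a := by rw [mul_pow]; ring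
      _ = g a := by rw [mul_one_div, div_self hsub, one_pow, one_mul]
  have hgt : Tendsto g (𝓝[({0, 1} : Set ℝ)ᶜ] (1 : ℝ)) (𝓝 ((-1) ^ (κ + 1 - c) * gbinom z (c - 1))) := by
    rw [← hg1]
    exact (hgcont.tendsto 1).mono_left nhdsWithin_le_nhds
  refine hgt.congr' ?_
  filter_upwards [self_mem_nhdsWithin] with a ha
  have ha' : a ≠ 0 ∧ a ≠ 1 := by
    simpa [Set.mem_compl_iff, Set.mem_insert_iff] using ha
  exact (key a ha'.1 ha'.2).symm
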